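/- Let E be a complex Hilbert space, A, M : E →L[ℂ] E continuous linear operators, y ∈ E, and ε, η real numbers with ‖id − M‖ ≤ 1, ‖id − A‖ ≤ ε < 1 and 0 < η ≤ 1. Define F : E → E by F(x) = (id − M)(x − η • A x) + y. Then F has a unique fixed point x∞ (F x∞ = x∞), and for every initial point x⁰ ∈ E the iterates F^[k](x⁰) converge to x∞ as k → ∞. -/

import Mathlib

/-- Under `‖id − M‖ ≤ 1`, `‖id − A‖ ≤ ε < 1` and `0 < η ≤ 1`, the
PGD iteration map `F x = (id − M)(x − η • A x) + y` has a unique fixed point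
`x∞`, and the iterates `F^[k] x⁰` converge to `x∞` for every starting point. -/
theorem stmt_2 {E : Type*} [NormedAddCommGroup E] [InnerProductSpace ℂ E]
    [CompleteSpace E] (A M : E →L[ℂ] E) (y : E) (ε η : ℝ)
    (hM : ‖ContinuousLinearMap.id ℂ E - M‖ ≤ 1)
    (hA : ‖ContinuousLinearMap.id ℂ E - A‖ ≤ ε) (hε : ε < 1)
    (hη0 : 0 < η) (hη1 : η ≤ 1)
    (F : E → E)
    (hF : ∀ x, F x = (ContinuousLinearMap.id ℂ E - M) (x - η • A x) + y) :
    ∃ xinf : E, F xinf = xinf ∧ (∀ x : E, F x = x → x = xinf) ∧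
      ∀ x0 : E, Filter.Tendsto (fun k => F^[k] x0) Filter.atTop (nhds xinf) := by
  have hε0 : (0:ℝ) ≤ ε := le_trans (norm_nonneg _) hA
  set K : ℝ := (1 - η) + η * ε with hK
  have hK0 : 0 ≤ K := by nlinarith
  have hK1 : K < 1 := by nlinarith
  -- bound on the linear part
  have key : ∀ x x' : E, ‖F x - F x'‖ ≤ K * ‖x - x'‖ := by
    intro x x'
    have hFd : F x - F x' =
        (ContinuousLinearMap.id ℂ E - M) ((x - x') - η • A (x - x')) := by
      rw [hF, hF]
      simp [map_sub, smul_sub]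
      abel
    rw [hFd]
    calc ‖(ContinuousLinearMap.id ℂ E - M) ((x - x') - η • A (x - x'))‖
        ≤ ‖ContinuousLinearMap.id ℂ E - M‖ * ‖(x - x') - η • A (x - x')‖ :=
          (ContinuousLinearMap.id ℂ E - M).le_opNorm _
      _ ≤ 1 * ‖(x - x') - η • A (x - x')‖ := by
          exact mul_le_mul_of_nonneg_right hM (norm_nonneg _)
      _ = ‖(1 - η) • (x - x') + η • ((ContinuousLinearMap.id ℂ E - A) (x - x'))‖ := by
          rw [one_mul]
          congr 1
          simp [sub_smul, smul_sub]
          abel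
      _ ≤ ‖(1 - η) • (x - x')‖ + ‖η • ((ContinuousLinearMap.id ℂ E - A) (x - x'))‖ :=
          norm_add_le _ _
      _ ≤ (1 - η) * ‖x - x'‖ + η * (ε * ‖x - x'‖) := by
          gcongr
          · rw [norm_smul, Real.norm_eq_abs, abs_of_nonneg (by linarith)]
          · rw [norm_smul, Real.norm_eq_abs, abs_of_pos hη0]
            have := (ContinuousLinearMap.id ℂ E - A).le_opNorm (x - x')
            have h2 : ‖(ContinuousLinearMap.id ℂ E - A) (x - x')‖ ≤ ε * ‖x - x'‖ :=
              this.trans (by gcongr)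
            nlinarith [norm_nonneg ((ContinuousLinearMap.id ℂ E - A) (x - x'))]
      _ = K * ‖x - x'‖ := by ring
  have hcontr : ContractingWith ⟨K, hK0⟩ F := by
    constructor
    · exact_mod_cast hK1
    · apply LipschitzWith.of_dist_le_mul
      intro x x'
      rw [dist_eq_norm, dist_eq_norm]
      exact key x x'
  refine ⟨hcontr.fixedPoint F, hcontr.fixedPoint_isFixedPt, ?_, ?_⟩
  · intro x hx
    exact hcontr.fixedPoint_unique hx
  · intro x0
    exact hcontr.tendsto_iterate_fixedPoint x0
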